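/- Let σ : {0,1}^ℕ → {0,1}^ℕ be the flip involution (σx)(n) = 1 − x(n), and let X ⊆ {0,1}^ℕ be a subshift with σ(X) = X whose ergodic T-invariant Borel probability measures supported on X are exactly two measures μ′ and μ″ with μ″ = σ_*μ′ and μ′ ≠ μ″. Then for every function assigning to each β > 0 an equilibrium state μ_β for βφ_X satisfying σ_*μ_β = μ_β, we have μ_β → ½μ′ + ½μ″ in the weak-* topology as β → +∞. -/

import Mathlib

open MeasureTheory Filter Topology
open scoped ENNReal Classical

noncomputable section

/-- The configuration space `{0,1}^ℕ` (with `false = 0`, `true = 1`). -/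
abbrev Conf : Type := ℕ → Bool

/-- The shift map `(Tx)(n) = x(n+1)`. -/
def shiftMap (x : Conf) : Conf := fun n => x (n + 1)

/-- The metric `d(x,y) = 2^{-min{n : x n ≠ y n}}` for `x ≠ y`, and `d(x,x) = 0`. -/
def dist01 (x y : Conf) : ℝ :=
  if x = y then 0 else ((2 : ℝ) ^ sInf {n : ℕ | x n ≠ y n})⁻¹

/-- A subshift: a nonempty, closed, shift-invariant subset of `{0,1}^ℕ`. -/
def IsSubshift (X : Set Conf) : Prop :=
  X.Nonempty ∧ IsClosed X ∧ ∀ x ∈ X, shiftMap x ∈ X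

/-- The potential `φ_X(y) = -d(y, X) = -inf {d(y,x) : x ∈ X}`. -/
def phiX (X : Set Conf) (y : Conf) : ℝ := -sInf (dist01 y '' X)

/-- The cylinder set of points whose first `n` symbols form the word `w`. -/
def cylinder {n : ℕ} (w : Fin n → Bool) : Set Conf := {x | ∀ i : Fin n, x i = w i}

/-- The entropy `H_n(μ)` of the `n`-block marginal of `μ` (base-2 logarithm). -/
def Hblock (μ : Measure Conf) (n : ℕ) : ℝ :=
  -∑ w : Fin n → Bool, (μ (cylinder w)).toReal * Real.logb 2 (μ (cylinder w)).toReal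

/-- The Kolmogorov–Sinai entropy `h(μ) = lim_n H_n(μ)/n`; since the limit exists
(by subadditivity) for shift-invariant measures, we may define it as a `limsup`. -/
def entropy (μ : Measure Conf) : ℝ :=
  limsup (fun n : ℕ => Hblock μ n / n) atTop

/-- A shift-invariant Borel probability measure. -/
def IsInvProb (μ : Measure Conf) : Prop :=
  IsProbabilityMeasure μ ∧ μ.map shiftMap = μ

/-- An equilibrium state for `βφ`: a shift-invariant Borel probability measure maximizing
`ν ↦ β∫φ dν + h(ν)` over all shift-invariant Borel probability measures. -/
def IsEquilibriumState (φ : Conf → ℝ) (β : ℝ) (μ : Measure Conf) : Prop :=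
  IsInvProb μ ∧ ∀ ν : Measure Conf, IsInvProb ν →
    β * ∫ x, φ x ∂ν + entropy ν ≤ β * ∫ x, φ x ∂μ + entropy μ

/-- Ergodicity: every shift-invariant Borel set has measure `0` or `1`. -/
def IsErgodicMeasure (μ : Measure Conf) : Prop :=
  ∀ s : Set Conf, MeasurableSet s → shiftMap ⁻¹' s = s → μ s = 0 ∨ μ s = 1

/-- The flip involution `(σx)(n) = 1 - x(n)` of `{0,1}^ℕ`. -/
def flip01 (x : Conf) : Conf := fun n => !(x n)

namespace Aux


lemma dist01_nonneg (x y : Conf) : 0 ≤ dist01 x y := by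
  unfold dist01; split
  · exact le_refl _
  · positivity

lemma dist01_le_one (x y : Conf) : dist01 x y ≤ 1 := by
  unfold dist01; split
  · norm_num
  · rw [inv_le_one_iff₀]; right; exact one_le_pow₀ (by norm_num)

lemma dist01_self (x : Conf) : dist01 x x = 0 := by simp [dist01]

lemma dist01_comm (x y : Conf) : dist01 x y = dist01 y x := by
  unfold dist01
  have h1 : (x = y) = (y = x) := by simp [eq_comm]
  have h2 : {n : ℕ | x n ≠ y n} = {n : ℕ | y n ≠ x n} := by ext n; simp [ne_comm]
  rw [h1, h2]

lemma dist01_le_of_agree {x y : Conf} {n : ℕ} (h : ∀ i < n, x i = y i) :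
    dist01 x y ≤ ((2:ℝ)^n)⁻¹ := by
  unfold dist01; split
  · positivity
  · rename_i hxy
    have hne : {m : ℕ | x m ≠ y m}.Nonempty := by
      by_contra hc
      exact hxy (funext fun i => not_not.1 fun hi =>
        hc ⟨i, hi⟩)
    have hmem := Nat.sInf_mem hne
    have hn : n ≤ sInf {m : ℕ | x m ≠ y m} := by
      by_contra hc
      push_neg at hc
      exact hmem (h _ hc)
    gcongr <;> norm_num

lemma agree_of_dist01_lt {x y : Conf} {n : ℕ} (h : dist01 x y < ((2:ℝ)^n)⁻¹) :
    ∀ i ≤ n, x i = y i := by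
  intro i hi
  unfold dist01 at h
  split at h
  · rename_i he; rw [he]
  · have h2 : (2:ℝ)^n < 2^(sInf {m : ℕ | x m ≠ y m}) := by
      have := (inv_lt_inv₀ (by positivity) (by positivity)).1 h
      linarith
    have hn : n < sInf {m : ℕ | x m ≠ y m} := by
      by_contra hc
      push_neg at hc
      exact absurd (pow_le_pow_right₀ (by norm_num) hc) (not_le.2 h2)
    exact not_not.1 (Nat.notMem_of_lt_sInf (lt_of_le_of_lt hi hn))

lemma dist01_triangle (x z y : Conf) : dist01 x y ≤ dist01 x z + dist01 z y := by
  rcases eq_or_ne x y with rfl | hxy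
  · rw [dist01_self]; exact add_nonneg (dist01_nonneg _ _) (dist01_nonneg _ _)
  have hne : {m : ℕ | x m ≠ y m}.Nonempty := by
    by_contra hc
    exact hxy (funext fun i => not_not.1 fun hi => hc ⟨i, hi⟩)
  have hmem := Nat.sInf_mem hne
  set m := sInf {m : ℕ | x m ≠ y m} with hm
  have key : x m ≠ z m ∨ z m ≠ y m := by
    by_contra hc
    push_neg at hc
    exact hmem (hc.1.trans hc.2)
  have hval : dist01 x y = ((2:ℝ)^m)⁻¹ := by unfold dist01; rw [if_neg hxy]
  rcases key with hk | hk
  · have hxz : x ≠ z := fun he => hk (by rw [he])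
    have : sInf {i : ℕ | x i ≠ z i} ≤ m := Nat.sInf_le hk
    have : dist01 x y ≤ dist01 x z := by
      rw [hval]; unfold dist01; rw [if_neg hxz]
      gcongr <;> norm_num
    linarith [dist01_nonneg z y]
  · have hzy : z ≠ y := fun he => hk (by rw [he])
    have : sInf {i : ℕ | z i ≠ y i} ≤ m := Nat.sInf_le hk
    have : dist01 x y ≤ dist01 z y := by
      rw [hval]; unfold dist01; rw [if_neg hzy]
      gcongr <;> norm_num
    linarith [dist01_nonneg x z]

/-- distance to `X`. -/
def Dd (X : Set Conf) (y : Conf) : ℝ := sInf (dist01 y '' X)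

lemma Dd_nonneg (X : Set Conf) (y : Conf) : 0 ≤ Dd X y :=
  Real.sInf_nonneg fun b ⟨x, _, he⟩ => he ▸ dist01_nonneg y x

lemma bddBelow_img (X : Set Conf) (y : Conf) : BddBelow (dist01 y '' X) :=
  ⟨0, fun b ⟨x, _, he⟩ => he ▸ dist01_nonneg y x⟩

lemma Dd_le {X : Set Conf} {x : Conf} (hx : x ∈ X) (y : Conf) : Dd X y ≤ dist01 y x :=
  csInf_le (bddBelow_img X y) ⟨x, hx, rfl⟩

lemma Dd_eq_zero_of_mem {X : Set Conf} {y : Conf} (hy : y ∈ X) : Dd X y = 0 :=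
  le_antisymm (by simpa [dist01_self] using Dd_le hy y) (Dd_nonneg X y)

lemma Dd_lip {X : Set Conf} (hX : X.Nonempty) (y z : Conf) :
    Dd X y ≤ dist01 y z + Dd X z := by
  have : Dd X y - dist01 y z ≤ Dd X z := by
    apply le_csInf (hX.image _)
    rintro b ⟨x, hx, rfl⟩
    have h1 := Dd_le hx y
    have h2 := dist01_triangle y z x
    linarith
  linarith

lemma cyl_mem_nhds (y : Conf) (n : ℕ) : {z : Conf | ∀ i ≤ n, z i = y i} ∈ 𝓝 y := by
  have : {z : Conf | ∀ i ≤ n, z i = y i} =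
      ⋂ i ∈ Finset.range (n+1), (fun z : Conf => z i) ⁻¹' {y i} := by
    ext z
    simp only [Set.mem_setOf_eq, Set.mem_iInter, Finset.mem_range, Set.mem_preimage,
      Set.mem_singleton_iff]
    exact ⟨fun h i hi => h i (Nat.lt_succ_iff.1 hi), fun h i hi => h i (Nat.lt_succ_iff.2 hi)⟩
  rw [this]
  exact Filter.biInter_finset_mem _ |>.2 fun i _ =>
    IsOpen.mem_nhds ((continuous_apply i).isOpen_preimage _ (isOpen_discrete _)) rfl

lemma exists_pow_lt {ε : ℝ} (hε : 0 < ε) : ∃ n : ℕ, ((2:ℝ)^n)⁻¹ < ε := by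
  obtain ⟨n, hn⟩ := pow_unbounded_of_one_lt ε⁻¹ (by norm_num : (1:ℝ) < 2)
  exact ⟨n, by rw [inv_lt_comm₀ (by positivity) hε]; exact hn⟩

lemma Dd_continuous {X : Set Conf} (hX : X.Nonempty) : Continuous (Dd X) := by
  rw [continuous_iff_continuousAt]
  intro y
  rw [ContinuousAt, Metric.tendsto_nhds]
  intro ε hε
  obtain ⟨n, hn⟩ := exists_pow_lt hε
  filter_upwards [cyl_mem_nhds y n] with z hz
  have hd : dist01 z y ≤ ((2:ℝ)^n)⁻¹ := dist01_le_of_agree fun i hi => hz i hi.le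
  have h1 := Dd_lip hX y z
  have h2 := Dd_lip hX z y
  rw [Real.dist_eq, abs_lt]
  rw [dist01_comm] at h1
  constructor <;> nlinarith

lemma Dd_pos_of_not_mem {X : Set Conf} (hX : X.Nonempty) (hcl : IsClosed X) {y : Conf} (hy : y ∉ X) :
    0 < Dd X y := by
  rcases lt_or_eq_of_le (Dd_nonneg X y) with h | h
  · exact h
  exfalso
  apply hy
  rw [← hcl.closure_eq]
  rw [mem_closure_iff]
  intro o ho hyo
  obtain ⟨I, u, hu, hsub⟩ := isOpen_pi_iff.1 ho y hyo
  set n := (I.sup id)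
  have hlt : Dd X y < ((2:ℝ)^n)⁻¹ := by rw [← h]; positivity
  obtain ⟨b, ⟨x, hx, rfl⟩, hbx⟩ := (csInf_lt_iff (bddBelow_img X y) (hX.image _)).1 hlt
  refine ⟨x, hsub fun i hi => ?_, hx⟩
  have hag : y i = x i := agree_of_dist01_lt hbx i (Finset.le_sup (f := id) hi)
  rw [← hag]
  exact (hu i hi).2



lemma mem_cylinder {n : ℕ} (w : Fin n → Bool) (x : Conf) :
    x ∈ _root_.cylinder w ↔ ∀ i : Fin n, x i = w i := Iff.rfl

lemma cylinder_eq_iInter {n : ℕ} (w : Fin n → Bool) :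
    _root_.cylinder w = ⋂ i : Fin n, (fun x : Conf => x i) ⁻¹' {w i} := by
  ext x; simp [mem_cylinder]

lemma measurableSet_cylinder {n : ℕ} (w : Fin n → Bool) : MeasurableSet (_root_.cylinder w) := by
  rw [cylinder_eq_iInter]
  exact MeasurableSet.iInter fun i => (measurable_pi_apply _) (measurableSet_singleton _)

lemma cylinder_disjoint {n : ℕ} {w v : Fin n → Bool} (h : w ≠ v) :
    Disjoint (_root_.cylinder w) (_root_.cylinder v) := by
  rw [Set.disjoint_iff_inter_eq_empty]
  ext x
  simp only [Set.mem_inter_iff, Set.mem_empty_iff_false, iff_false]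
  rintro ⟨hw, hv⟩
  exact h (funext fun i => (hw i).symm.trans (hv i))

lemma cylinder_cover (n : ℕ) : ⋃ w : Fin n → Bool, _root_.cylinder w = Set.univ := by
  ext x
  simp only [Set.mem_iUnion, Set.mem_univ, iff_true]
  exact ⟨fun i => x i, fun i => rfl⟩

lemma sum_cylinder_measure (ν : Measure Conf) [IsProbabilityMeasure ν] (n : ℕ) :
    ∑ w : Fin n → Bool, ν (_root_.cylinder w) = 1 := by
  rw [← tsum_fintype (L := SummationFilter.unconditional _), ← measure_iUnion (fun w v hwv => cylinder_disjoint hwv)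
    (fun w => measurableSet_cylinder w), cylinder_cover, measure_univ]

lemma cyl_inter_eq {n m : ℕ} (w : Fin n → Bool) (v : Fin m → Bool) (hnm : n ≤ m)
    {x : Conf} (hxw : x ∈ _root_.cylinder w) (hxv : x ∈ _root_.cylinder v) :
    _root_.cylinder w ∩ _root_.cylinder v = _root_.cylinder v := by
  apply Set.Subset.antisymm Set.inter_subset_right
  intro z hz
  refine ⟨fun i => ?_, hz⟩
  have hj : z i = v ⟨(i : ℕ), lt_of_lt_of_le i.2 hnm⟩ := hz ⟨(i : ℕ), lt_of_lt_of_le i.2 hnm⟩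
  have hx1 : x i = w i := hxw i
  have hx2 : x i = v ⟨(i : ℕ), lt_of_lt_of_le i.2 hnm⟩ := hxv ⟨(i : ℕ), lt_of_lt_of_le i.2 hnm⟩
  rw [hj, ← hx2, hx1]

/-- the collection of cylinder sets -/
def cylSets : Set (Set Conf) := {S | ∃ (n : ℕ) (w : Fin n → Bool), S = _root_.cylinder w}

lemma isPiSystem_cylSets : IsPiSystem cylSets := by
  rintro S ⟨n, w, rfl⟩ T ⟨m, v, rfl⟩ ⟨x, hxw, hxv⟩
  rcases le_total n m with h | h
  · exact ⟨m, v, cyl_inter_eq w v h hxw hxv⟩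
  · rw [Set.inter_comm]
    exact ⟨n, w, cyl_inter_eq v w h hxv hxw⟩

lemma eval_preimage_singleton (i : ℕ) (b : Bool) :
    (fun x : Conf => x i) ⁻¹' {b} =
      ⋃ (w : Fin (i+1) → Bool) (_ : w (Fin.last i) = b), _root_.cylinder w := by
  ext x
  simp only [Set.mem_preimage, Set.mem_singleton_iff, Set.mem_iUnion]
  constructor
  · intro hb
    exact ⟨fun j => x j, hb, fun j => rfl⟩
  · rintro ⟨w, hwb, hxw⟩
    have := hxw (Fin.last i)
    simpa [hwb] using this

lemma generateFrom_cylSets :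
    (inferInstance : MeasurableSpace Conf) = MeasurableSpace.generateFrom cylSets := by
  apply le_antisymm
  · rw [show (inferInstance : MeasurableSpace Conf) = MeasurableSpace.pi from rfl,
      MeasurableSpace.pi]
    apply iSup_le
    intro i
    rintro s ⟨t, -, rfl⟩
    have : (fun x : Conf => x i) ⁻¹' t = ⋃ b ∈ t, (fun x : Conf => x i) ⁻¹' {b} := by
      ext x; simp
    rw [this]
    apply MeasurableSet.biUnion t.to_countable
    intro b _
    rw [eval_preimage_singleton]
    apply MeasurableSet.iUnion
    intro w
    apply MeasurableSet.iUnion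
    intro _
    exact MeasurableSpace.measurableSet_generateFrom ⟨i+1, w, rfl⟩
  · apply MeasurableSpace.generateFrom_le
    rintro S ⟨n, w, rfl⟩
    exact measurableSet_cylinder w

lemma measure_eq_of_cylinder (μ ν : Measure Conf) [IsProbabilityMeasure μ]
    [IsProbabilityMeasure ν]
    (h : ∀ (n : ℕ) (w : Fin n → Bool), μ (_root_.cylinder w) = ν (_root_.cylinder w)) :
    μ = ν := by
  apply MeasureTheory.ext_of_generate_finite cylSets generateFrom_cylSets isPiSystem_cylSets
  · rintro S ⟨n, w, rfl⟩
    exact h n w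
  · simp



variable (p : ∀ n, (Fin n → Bool) → ℝ)

def cum : ∀ n, (Fin n → Bool) → ℝ
  | 0, _ => 0
  | (n+1), v => cum n (Fin.init v) +
      (if v (Fin.last n) then p (n+1) (Fin.snoc (Fin.init v) false) else 0)

def cellA : ∀ n, (Fin n → Bool) → Set ℝ
  | 0, _ => Set.Ico 0 1
  | (n+1), v => cellA n (Fin.init v) ∩
      (if v (Fin.last n) then Set.Ici (cum p n (Fin.init v) + p (n+1) (Fin.snoc (Fin.init v) false))
       else Set.Iio (cum p n (Fin.init v) + p (n+1) (Fin.snoc (Fin.init v) false)))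

lemma cum_zero (w : Fin 0 → Bool) : cum p 0 w = 0 := by rw [cum]
lemma cum_succ (n : ℕ) (v : Fin (n+1) → Bool) :
    cum p (n+1) v = cum p n (Fin.init v) +
      (if v (Fin.last n) then p (n+1) (Fin.snoc (Fin.init v) false) else 0) := by rw [cum]
lemma cellA_zero (w : Fin 0 → Bool) : cellA p 0 w = Set.Ico 0 1 := by rw [cellA]
lemma cellA_succ (n : ℕ) (v : Fin (n+1) → Bool) :
    cellA p (n+1) v = cellA p n (Fin.init v) ∩
      (if v (Fin.last n) then Set.Ici (cum p n (Fin.init v) + p (n+1) (Fin.snoc (Fin.init v) false))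
       else Set.Iio (cum p n (Fin.init v) + p (n+1) (Fin.snoc (Fin.init v) false))) := by rw [cellA]

lemma cellA_measurable : ∀ n (w : Fin n → Bool), MeasurableSet (cellA p n w)
  | 0, w => by rw [cellA_zero]; exact measurableSet_Ico
  | (n+1), v => by
    rw [cellA_succ]
    refine (cellA_measurable n (Fin.init v)).inter ?_
    split
    · exact measurableSet_Ici
    · exact measurableSet_Iio

section consistency

variable (hp0 : ∀ n w, 0 ≤ p n w) (hp1 : ∀ w : Fin 0 → Bool, p 0 w = 1)
  (hpc : ∀ n (w : Fin n → Bool), p n w = p (n+1) (Fin.snoc w false) + p (n+1) (Fin.snoc w true))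

include hp1 hpc in
lemma cellA_subset_Ico : ∀ n (w : Fin n → Bool),
    cellA p n w ⊆ Set.Ico (cum p n w) (cum p n w + p n w)
  | 0, w => by rw [cellA_zero, cum_zero, hp1 w]; simp
  | (n+1), v => by
    intro t ht
    rw [cellA_succ] at ht
    obtain ⟨ht1, ht2⟩ := ht
    obtain ⟨hl, hr⟩ := cellA_subset_Ico n (Fin.init v) ht1
    have hsnoc := Fin.snoc_init_self v
    rw [hpc n (Fin.init v)] at hr
    rw [Set.mem_Ico, cum_succ]
    rcases hb : v (Fin.last n) with _ | _
    · rw [hb] at hsnoc ht2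
      rw [if_neg Bool.false_ne_true] at ht2
      rw [if_neg Bool.false_ne_true, add_zero]
      refine ⟨hl, ?_⟩
      have hv : p (n+1) v = p (n+1) (Fin.snoc (Fin.init v) false) := by rw [hsnoc]
      rw [hv]
      exact ht2
    · rw [hb] at hsnoc ht2
      rw [if_pos rfl] at ht2
      rw [if_pos rfl]
      refine ⟨ht2, ?_⟩
      have hv : p (n+1) v = p (n+1) (Fin.snoc (Fin.init v) true) := by rw [hsnoc]
      rw [hv]
      linarith

lemma cellA_succ_mem {n : ℕ} {w : Fin n → Bool} {t : ℝ} (ht : t ∈ cellA p n w) :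
    ∃ b : Bool, t ∈ cellA p (n+1) (Fin.snoc w b) := by
  by_cases hc : cum p n w + p (n+1) (Fin.snoc w false) ≤ t
  · refine ⟨true, ?_⟩
    rw [cellA_succ, Fin.init_snoc, Fin.snoc_last, if_pos rfl]
    exact ⟨ht, hc⟩
  · refine ⟨false, ?_⟩
    rw [cellA_succ, Fin.init_snoc, Fin.snoc_last, if_neg Bool.false_ne_true]
    exact ⟨ht, lt_of_not_ge hc⟩

lemma cellA_cover : ∀ n, ∀ t ∈ Set.Ico (0:ℝ) 1, ∃ w : Fin n → Bool, t ∈ cellA p n w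
  | 0, t, ht => ⟨fun i => i.elim0, by rw [cellA_zero]; exact ht⟩
  | (n+1), t, ht => by
    obtain ⟨w, hw⟩ := cellA_cover n t ht
    obtain ⟨b, hb⟩ := cellA_succ_mem p hw
    exact ⟨Fin.snoc w b, hb⟩

lemma cellA_disjoint : ∀ n (w v : Fin n → Bool), w ≠ v →
    Disjoint (cellA p n w) (cellA p n v)
  | 0, w, v, h => absurd (funext fun i => i.elim0) h
  | (n+1), w, v, h => by
    rw [cellA_succ, cellA_succ]
    by_cases hinit : Fin.init w = Fin.init v
    · have hlast : w (Fin.last n) ≠ v (Fin.last n) := by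
        intro he
        apply h
        rw [← Fin.snoc_init_self w, ← Fin.snoc_init_self v, hinit, he]
      have hθ : cum p n (Fin.init w) + p (n+1) (Fin.snoc (Fin.init w) false) =
          cum p n (Fin.init v) + p (n+1) (Fin.snoc (Fin.init v) false) := by rw [hinit]
      rcases hb : w (Fin.last n) with _ | _
      · have hb' : v (Fin.last n) = true := by
          rcases hv : v (Fin.last n) with _ | _
          · exact absurd (hb.trans hv.symm) hlast
          · rfl
        apply Disjoint.mono Set.inter_subset_right Set.inter_subset_right
        rw [hb', if_neg Bool.false_ne_true, if_pos rfl, ← hθ]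
        exact Set.Iio_disjoint_Ici le_rfl
      · have hb' : v (Fin.last n) = false := by
          rcases hv : v (Fin.last n) with _ | _
          · rfl
          · exact absurd (hb.trans hv.symm) hlast
        apply Disjoint.mono Set.inter_subset_right Set.inter_subset_right
        rw [hb', if_pos rfl, if_neg Bool.false_ne_true, ← hθ]
        exact (Set.Iio_disjoint_Ici le_rfl).symm
    · exact Disjoint.mono Set.inter_subset_left Set.inter_subset_left
        (cellA_disjoint n _ _ hinit)

def trunc {n : ℕ} (k : ℕ) (h : k ≤ n) (w : Fin n → Bool) : Fin k → Bool :=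
  fun j => w ⟨j, lt_of_lt_of_le j.2 h⟩

lemma cellA_trunc : ∀ n (w : Fin n → Bool) (k : ℕ) (h : k ≤ n),
    cellA p n w ⊆ cellA p k (trunc k h w)
  | 0, w, k, h => by
    have hk : k = 0 := Nat.le_zero.1 h
    subst hk
    rw [cellA_zero, cellA_zero]
  | (n+1), v, k, h => by
    rcases Nat.lt_or_ge k (n+1) with hk | hk
    · have hk' : k ≤ n := Nat.lt_succ_iff.1 hk
      have h1 : cellA p (n+1) v ⊆ cellA p n (Fin.init v) := by
        rw [cellA_succ]; exact Set.inter_subset_left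
      have h2 := cellA_trunc n (Fin.init v) k hk'
      have he : trunc k hk' (Fin.init v) = trunc k h v := by
        funext j
        show Fin.init v _ = v _
        simp only [Fin.init]
        exact congrArg v (Fin.ext rfl)
      exact fun t ht => he ▸ h2 (h1 ht)
    · have hk1 : k = n+1 := le_antisymm h hk
      subst hk1
      have he : trunc (n+1) h v = v := by
        funext j
        exact congrArg v (Fin.ext rfl)
      rw [he]

include hp1 hpc in
lemma sum_p_eq_one : ∀ n, ∑ w : Fin n → Bool, p n w = 1
  | 0 => by
    rw [Fintype.sum_unique]
    exact hp1 _
  | (n+1) => by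
    have he := Equiv.sum_comp (Fin.snocEquiv (fun _ : Fin (n+1) => Bool)) (p (n+1))
    rw [← he, Fintype.sum_prod_type, Fintype.sum_bool]
    have hb : ∀ b : Bool, ∑ w : Fin n → Bool, p (n+1) ((Fin.snocEquiv (fun _ => Bool)) (b, w))
        = ∑ w : Fin n → Bool, p (n+1) (Fin.snoc w b) := by
      intro b
      apply Finset.sum_congr rfl
      intro w _
      rfl
    rw [hb true, hb false, ← Finset.sum_add_distrib, ← sum_p_eq_one n]
    apply Finset.sum_congr rfl
    intro w _
    rw [hpc n w]
    ring

include hp0 hp1 hpc in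
lemma volume_cellA (n : ℕ) (w : Fin n → Bool) :
    volume (cellA p n w) = ENNReal.ofReal (p n w) := by
  classical
  have hcover : ⋃ v : Fin n → Bool, cellA p n v = Set.Ico (0:ℝ) 1 := by
    apply Set.Subset.antisymm
    · apply Set.iUnion_subset
      intro v t ht
      have := cellA_trunc p n v 0 (Nat.zero_le n) ht
      rwa [cellA_zero] at this
    · intro t ht
      obtain ⟨v, hv⟩ := cellA_cover p n t ht
      exact Set.mem_iUnion.2 ⟨v, hv⟩
  have hsum : ∑ v : Fin n → Bool, volume (cellA p n v) = 1 := by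
    rw [← tsum_fintype (L := SummationFilter.unconditional _), ← measure_iUnion (fun a b hab => cellA_disjoint p n a b hab)
      (fun v => cellA_measurable p n v), hcover, Real.volume_Ico]
    norm_num
  have hle : ∀ v : Fin n → Bool, volume (cellA p n v) ≤ ENNReal.ofReal (p n v) := by
    intro v
    calc volume (cellA p n v) ≤ volume (Set.Ico (cum p n v) (cum p n v + p n v)) :=
          measure_mono (cellA_subset_Ico p hp1 hpc n v)
      _ = ENNReal.ofReal (p n v) := by rw [Real.volume_Ico]; ring_nf
  have hfin : ∀ v : Fin n → Bool, volume (cellA p n v) ≠ ∞ :=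
    fun v => ne_top_of_le_ne_top ENNReal.ofReal_ne_top (hle v)
  have htoReal : ∀ v : Fin n → Bool, (volume (cellA p n v)).toReal ≤ p n v := by
    intro v
    rw [← ENNReal.ofReal_le_ofReal_iff (hp0 n v), ENNReal.ofReal_toReal (hfin v)]
    exact hle v
  have hsumReal : ∑ v : Fin n → Bool, (volume (cellA p n v)).toReal = 1 := by
    rw [← ENNReal.toReal_sum (fun v _ => hfin v), hsum, ENNReal.toReal_one]
  have heq := (Finset.sum_eq_sum_iff_of_le (fun v _ => htoReal v)).1
    (by rw [hsumReal, sum_p_eq_one p hp1 hpc n])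
  have hw := heq w (Finset.mem_univ w)
  rw [← hw, ENNReal.ofReal_toReal (hfin w)]

end consistency

def Uset (n : ℕ) : Set ℝ :=
  ⋃ (v : Fin (n+1) → Bool) (_ : v (Fin.last n) = true), cellA p (n+1) v

lemma Uset_measurable (n : ℕ) : MeasurableSet (Uset p n) :=
  MeasurableSet.iUnion fun v => MeasurableSet.iUnion fun _ => cellA_measurable p (n+1) v

def gmap : ℝ → Conf := fun t n => if t ∈ Uset p n then true else false

lemma gmap_measurable : Measurable (gmap p) := by
  apply measurable_pi_lambda
  intro n
  apply measurable_to_countable'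
  intro y
  rcases y with _ | _
  · have : (fun t => gmap p t n) ⁻¹' {false} = (Uset p n)ᶜ := by
      ext t
      simp [gmap]
    rw [this]
    exact (Uset_measurable p n).compl
  · have : (fun t => gmap p t n) ⁻¹' {true} = Uset p n := by
      ext t
      simp [gmap]
    rw [this]
    exact Uset_measurable p n

lemma gmap_cell {n : ℕ} {w : Fin n → Bool} {t : ℝ} (ht : t ∈ cellA p n w) :
    ∀ i : Fin n, gmap p t (i : ℕ) = w i := by
  intro i
  have hk : (i : ℕ) + 1 ≤ n := i.2
  set u := trunc ((i : ℕ)+1) hk w with hu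
  have htu : t ∈ cellA p ((i : ℕ)+1) u := cellA_trunc p n w _ hk ht
  have hul : u (Fin.last (i : ℕ)) = w i := by
    rw [hu]
    exact congrArg w (Fin.ext rfl)
  rcases hwi : w i with _ | _
  · -- need : t ∉ Uset p i
    have hnot : t ∉ Uset p (i : ℕ) := by
      rintro hmem
      obtain ⟨v, hv⟩ := Set.mem_iUnion.1 hmem
      obtain ⟨hvl, htv⟩ := Set.mem_iUnion.1 hv
      have hne : v ≠ u := by
        intro he
        rw [he, hul, hwi] at hvl
        exact Bool.false_ne_true hvl
      exact (cellA_disjoint p _ v u hne).ne_of_mem htv htu rfl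
    simp [gmap, hnot]
  · have : t ∈ Uset p (i : ℕ) := Set.mem_iUnion.2 ⟨u, Set.mem_iUnion.2 ⟨by rw [hul, hwi], htu⟩⟩
    simp [gmap, this]

variable (hp0 : ∀ n w, 0 ≤ p n w) (hp1 : ∀ w : Fin 0 → Bool, p 0 w = 1)
  (hpc : ∀ n (w : Fin n → Bool), p n w = p (n+1) (Fin.snoc w false) + p (n+1) (Fin.snoc w true))

include hp0 hp1 hpc in
theorem exists_measure_of_cylinderData :
    ∃ ν : Measure Conf, IsProbabilityMeasure ν ∧
      ∀ (n : ℕ) (w : Fin n → Bool), ν (_root_.cylinder w) = ENNReal.ofReal (p n w) := by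
  classical
  refine ⟨Measure.map (gmap p) (volume.restrict (Set.Ico 0 1)), ⟨?_⟩, ?_⟩
  · rw [Measure.map_apply (gmap_measurable p) MeasurableSet.univ]
    simp [Real.volume_Ico]
  · intro n w
    rw [Measure.map_apply (gmap_measurable p) (measurableSet_cylinder w),
      Measure.restrict_apply' measurableSet_Ico]
    have hset : gmap p ⁻¹' (_root_.cylinder w) ∩ Set.Ico 0 1 = cellA p n w := by
      apply Set.Subset.antisymm
      · rintro t ⟨htc, htI⟩
        obtain ⟨w', hw'⟩ := cellA_cover p n t htI
        have hg := gmap_cell p hw'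
        have : w' = w := funext fun i => (hg i).symm.trans (htc i)
        rwa [← this]
      · intro t ht
        have htI : t ∈ Set.Ico (0:ℝ) 1 := by
          have := cellA_trunc p n w 0 (Nat.zero_le n) ht
          rwa [cellA_zero] at this
        exact ⟨fun i => gmap_cell p ht i, htI⟩
    rw [hset]
    exact volume_cellA p hp0 hp1 hpc n w


/-- a point of the cylinder -/
def emb {n : ℕ} (w : Fin n → Bool) : Conf := fun i => if h : i < n then w ⟨i, h⟩ else false

lemma modulus (g : C(Conf, ℝ)) {ε : ℝ} (hε : 0 < ε) :
    ∃ n : ℕ, ∀ x y : Conf, (∀ i < n, x i = y i) → |g x - g y| ≤ ε := by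
  have key : ∀ x : Conf, ∃ m : ℕ, ∀ y, (∀ i < m, y i = x i) → |g y - g x| < ε/2 := by
    intro x
    have hS : IsOpen (g ⁻¹' Metric.ball (g x) (ε/2)) :=
      g.continuous.isOpen_preimage _ Metric.isOpen_ball
    have hxS : x ∈ g ⁻¹' Metric.ball (g x) (ε/2) := by
      simp only [Set.mem_preimage, Metric.mem_ball, dist_self]
      positivity
    obtain ⟨I, u, hu, hsub⟩ := isOpen_pi_iff.1 hS x hxS
    refine ⟨I.sup id + 1, fun y hy => ?_⟩
    have : y ∈ (I : Set ℕ).pi u := by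
      intro i hi
      have hil : i < I.sup id + 1 := Nat.lt_succ_of_le (Finset.le_sup (f := id) hi)
      rw [hy i hil]
      exact (hu i hi).2
    have := hsub this
    simpa [Real.dist_eq, Metric.mem_ball] using this
  choose nfun hn using key
  have hnh : ∀ x : Conf, {y : Conf | ∀ i < nfun x, y i = x i} ∈ 𝓝 x := by
    intro x
    apply Filter.mem_of_superset (cyl_mem_nhds x (nfun x))
    intro y hy i hi
    exact hy i hi.le
  obtain ⟨t, ht⟩ := isCompact_univ.elim_nhds_subcover
    (fun x => {y : Conf | ∀ i < nfun x, y i = x i}) (fun x _ => hnh x)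
  refine ⟨t.sup nfun, fun x y hxy => ?_⟩
  have hx : x ∈ ⋃ z ∈ t, {y : Conf | ∀ i < nfun z, y i = z i} := ht.2 (Set.mem_univ x)
  obtain ⟨z, hz, hxz⟩ := Set.mem_iUnion₂.1 hx
  have hnz : nfun z ≤ t.sup nfun := Finset.le_sup hz
  have hyz : ∀ i < nfun z, y i = z i := fun i hi =>
    ((hxy i (lt_of_lt_of_le hi hnz)).symm).trans (hxz i hi)
  have h1 := hn z x hxz
  have h2 := hn z y hyz
  have h3 : |g x - g y| ≤ |g x - g z| + |g z - g y| := abs_sub_le _ _ _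
  rw [abs_sub_comm (g z) (g y)] at h3
  linarith

def apprInt (n : ℕ) (g : Conf → ℝ) (ν : Measure Conf) : ℝ :=
  ∑ w : Fin n → Bool, g (emb w) * (ν (_root_.cylinder w)).toReal

lemma measure_eq_sum_restrict (ν : Measure Conf) (n : ℕ) :
    ν = ∑ w : Fin n → Bool, ν.restrict (_root_.cylinder w) := by
  ext A hA
  rw [Measure.finset_sum_apply]
  have : A = ⋃ w : Fin n → Bool, A ∩ _root_.cylinder w := by
    rw [← Set.inter_iUnion, cylinder_cover, Set.inter_univ]
  conv_lhs => rw [this]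
  rw [measure_iUnion]
  · rw [tsum_fintype]
    apply Finset.sum_congr rfl
    intro w _
    rw [Measure.restrict_apply hA]
  · exact fun w v hwv => (cylinder_disjoint hwv).mono Set.inter_subset_right Set.inter_subset_right
  · exact fun w => hA.inter (measurableSet_cylinder w)

lemma integral_apprx (g : C(Conf, ℝ)) (ν : Measure Conf) [IsProbabilityMeasure ν]
    {n : ℕ} {ε : ℝ} (hmod : ∀ x y : Conf, (∀ i < n, x i = y i) → |g x - g y| ≤ ε) :
    |∫ x, g x ∂ν - apprInt n g ν| ≤ ε := by
  have hεpos : 0 ≤ ε := le_trans (abs_nonneg _) (hmod (emb (fun _ : Fin n => false)) _ (fun _ _ => rfl))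
  have hint : ∀ w : Fin n → Bool, Integrable g (ν.restrict (_root_.cylinder w)) :=
    fun w => (BoundedContinuousFunction.mkOfCompact g).integrable _
  have hsplit : ∫ x, g x ∂ν = ∑ w : Fin n → Bool, ∫ x, g x ∂(ν.restrict (_root_.cylinder w)) := by
    conv_lhs => rw [measure_eq_sum_restrict ν n]
    rw [integral_finset_sum_measure (fun w _ => hint w)]
  have hterm : ∀ w : Fin n → Bool,
      |∫ x, g x ∂(ν.restrict (_root_.cylinder w)) - g (emb w) * (ν (_root_.cylinder w)).toReal|
        ≤ ε * (ν (_root_.cylinder w)).toReal := by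
    intro w
    have hconst : ∫ _ : Conf, g (emb w) ∂(ν.restrict (_root_.cylinder w))
        = g (emb w) * (ν (_root_.cylinder w)).toReal := by
      rw [integral_const, measureReal_restrict_apply_univ, Measure.real, smul_eq_mul, mul_comm]
    rw [← hconst, ← integral_sub (hint w) (integrable_const _)]
    have hbound : ∀ᵐ x ∂(ν.restrict (_root_.cylinder w)), ‖g x - g (emb w)‖ ≤ ε := by
      rw [ae_restrict_iff' (measurableSet_cylinder w)]
      apply ae_of_all
      intro x hx
      apply hmod
      intro i hi
      have h1 : x i = w ⟨i, hi⟩ := hx ⟨i, hi⟩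
      have h2 : emb w i = w ⟨i, hi⟩ := dif_pos hi
      rw [h1, h2]
    calc |∫ x, (g x - g (emb w)) ∂(ν.restrict (_root_.cylinder w))|
        ≤ ε * ((ν.restrict (_root_.cylinder w)) Set.univ).toReal :=
          norm_integral_le_of_norm_le_const hbound
      _ = ε * (ν (_root_.cylinder w)).toReal := by rw [Measure.restrict_apply_univ]
  have hsum1 : ∑ w : Fin n → Bool, (ν (_root_.cylinder w)).toReal = 1 := by
    have := sum_cylinder_measure ν n
    rw [← ENNReal.toReal_sum (fun w _ => measure_ne_top ν _), this, ENNReal.toReal_one]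
  calc |∫ x, g x ∂ν - apprInt n g ν|
      = |∑ w : Fin n → Bool, (∫ x, g x ∂(ν.restrict (_root_.cylinder w))
          - g (emb w) * (ν (_root_.cylinder w)).toReal)| := by
        rw [hsplit, apprInt, ← Finset.sum_sub_distrib]
    _ ≤ ∑ w : Fin n → Bool, |∫ x, g x ∂(ν.restrict (_root_.cylinder w))
          - g (emb w) * (ν (_root_.cylinder w)).toReal| := Finset.abs_sum_le_sum_abs _ _
    _ ≤ ∑ w : Fin n → Bool, ε * (ν (_root_.cylinder w)).toReal :=
        Finset.sum_le_sum (fun w _ => hterm w)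
    _ = ε := by rw [← Finset.mul_sum, hsum1, mul_one]

lemma tendsto_integral_of_cylinder (ν : ℕ → Measure Conf) (νl : Measure Conf)
    [∀ k, IsProbabilityMeasure (ν k)] [IsProbabilityMeasure νl]
    (hcyl : ∀ (n : ℕ) (w : Fin n → Bool),
      Tendsto (fun k => ((ν k) (_root_.cylinder w)).toReal) atTop
        (𝓝 ((νl (_root_.cylinder w)).toReal)))
    (g : C(Conf, ℝ)) :
    Tendsto (fun k => ∫ x, g x ∂(ν k)) atTop (𝓝 (∫ x, g x ∂νl)) := by
  rw [Metric.tendsto_atTop]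
  intro ε hε
  obtain ⟨n, hmod⟩ := modulus g (show (0:ℝ) < ε/4 by linarith)
  have happr : Tendsto (fun k => apprInt n g (ν k)) atTop (𝓝 (apprInt n g νl)) := by
    apply tendsto_finset_sum
    intro w _
    exact ((hcyl n w).const_mul _)
  rw [Metric.tendsto_atTop] at happr
  obtain ⟨K, hK⟩ := happr (ε/4) (by linarith)
  refine ⟨K, fun k hk => ?_⟩
  have h1 := integral_apprx g (ν k) hmod
  have h2 := integral_apprx g νl hmod
  have h3 := hK k hk
  rw [Real.dist_eq] at h3 ⊢
  have : |∫ x, g x ∂(ν k) - ∫ x, g x ∂νl| ≤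
      |∫ x, g x ∂(ν k) - apprInt n g (ν k)| + |apprInt n g (ν k) - apprInt n g νl|
        + |apprInt n g νl - ∫ x, g x ∂νl| := by
    have := abs_sub_le (∫ x, g x ∂(ν k)) (apprInt n g (ν k)) (∫ x, g x ∂νl)
    have := abs_sub_le (apprInt n g (ν k)) (apprInt n g νl) (∫ x, g x ∂νl)
    linarith
  rw [abs_sub_comm (apprInt n g νl)] at this
  linarith

lemma sum_cylinder_toReal (ν : Measure Conf) [IsProbabilityMeasure ν] (n : ℕ) :
    ∑ w : Fin n → Bool, (ν (_root_.cylinder w)).toReal = 1 := by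
  rw [← ENNReal.toReal_sum (fun w _ => measure_ne_top ν _), sum_cylinder_measure ν n,
    ENNReal.toReal_one]

lemma Hblock_nonneg (μ : Measure Conf) [IsProbabilityMeasure μ] (n : ℕ) :
    0 ≤ Hblock μ n := by
  rw [Hblock, neg_nonneg]
  apply Finset.sum_nonpos
  intro w _
  have h0 : (0:ℝ) ≤ (μ (_root_.cylinder w)).toReal := ENNReal.toReal_nonneg
  have h1 : (μ (_root_.cylinder w)).toReal ≤ 1 :=
    le_trans (ENNReal.toReal_mono ENNReal.one_ne_top prob_le_one) (by norm_num)
  have hlog : Real.logb 2 (μ (_root_.cylinder w)).toReal ≤ 0 :=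
    Real.logb_nonpos (by norm_num) h0 h1
  exact mul_nonpos_iff.2 (Or.inl ⟨h0, hlog⟩)

lemma Hblock_le (μ : Measure Conf) [IsProbabilityMeasure μ] (n : ℕ) :
    Hblock μ n ≤ n := by
  classical
  set N : ℝ := (2:ℝ)^n with hN
  have hNpos : 0 < N := by positivity
  set P : (Fin n → Bool) → ℝ := fun w => (μ (_root_.cylinder w)).toReal with hP
  have hP0 : ∀ w, 0 ≤ P w := fun w => ENNReal.toReal_nonneg
  have hPsum : ∑ w : Fin n → Bool, P w = 1 := sum_cylinder_toReal μ n
  have hcard : (Fintype.card (Fin n → Bool) : ℝ) = N := by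
    rw [Fintype.card_fun, Fintype.card_fin, Fintype.card_bool]
    push_cast [hN]
    rfl
  -- Jensen
  have hjen := Real.concaveOn_negMulLog.le_map_sum (t := Finset.univ)
    (w := fun _ : Fin n → Bool => 1/N) (p := P)
    (fun _ _ => by positivity)
    (by rw [Finset.sum_const, Finset.card_univ, nsmul_eq_mul, hcard]; field_simp)
    (fun w _ => hP0 w)
  have hsum_smul : ∑ w : Fin n → Bool, (1/N) • P w = 1/N := by
    simp only [smul_eq_mul, ← Finset.mul_sum, hPsum, mul_one]
  rw [hsum_smul] at hjen
  have hjen2 : ∑ w : Fin n → Bool, Real.negMulLog (P w) ≤ N * Real.negMulLog (1/N) := by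
    have := Finset.sum_le_sum (fun w (_ : w ∈ Finset.univ) =>
      le_refl ((1/N) • Real.negMulLog (P w)))
    calc ∑ w : Fin n → Bool, Real.negMulLog (P w)
        = N * ∑ w : Fin n → Bool, (1/N) • Real.negMulLog (P w) := by
          rw [Finset.smul_sum.symm]
          simp only [smul_eq_mul]
          field_simp
      _ ≤ N * Real.negMulLog (1/N) := by
          apply mul_le_mul_of_nonneg_left hjen hNpos.le
  have hval : N * Real.negMulLog (1/N) = Real.log N := by
    rw [Real.negMulLog, one_div, Real.log_inv]
    field_simp
  rw [hval] at hjen2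
  have hlogN : Real.log N = n * Real.log 2 := by
    rw [hN, Real.log_pow]
  have hH : Hblock μ n = (∑ w : Fin n → Bool, Real.negMulLog (P w)) / Real.log 2 := by
    rw [Hblock, ← Finset.sum_neg_distrib, Finset.sum_div]
    apply Finset.sum_congr rfl
    intro w _
    rw [Real.logb, Real.negMulLog]
    field_simp
    rfl
  rw [hH]
  rw [div_le_iff₀ (Real.log_pos (by norm_num))]
  rw [hlogN] at hjen2
  linarith

lemma entropy_nonneg (μ : Measure Conf) [IsProbabilityMeasure μ] : 0 ≤ entropy μ := by
  apply Filter.le_limsup_of_frequently_le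
  · apply Filter.Frequently.of_forall
    intro n
    exact div_nonneg (Hblock_nonneg μ n) (Nat.cast_nonneg n)
  · apply Filter.isBoundedUnder_of
    refine ⟨1, fun n => ?_⟩
    rcases Nat.eq_zero_or_pos n with rfl | hn
    · simp
    · rw [div_le_one (by positivity)]
      exact Hblock_le μ n
    
lemma entropy_le_one (μ : Measure Conf) [IsProbabilityMeasure μ] : entropy μ ≤ 1 := by
  apply Filter.limsup_le_of_le
  · apply Filter.IsBoundedUnder.isCoboundedUnder_le
    apply Filter.isBoundedUnder_of (r := (· ≥ ·))
    refine ⟨0, fun n => ?_⟩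
    exact div_nonneg (Hblock_nonneg μ n) (Nat.cast_nonneg n)
  · apply Filter.Eventually.of_forall
    intro n
    rcases Nat.eq_zero_or_pos n with rfl | hn
    · simp
    · rw [div_le_one (by positivity)]
      exact Hblock_le μ n

section Xfacts
variable {X : Set Conf} (hXne : X.Nonempty) (hXcl : IsClosed X)

include hXne in
lemma Dd_integrable (ν : Measure Conf) [IsProbabilityMeasure ν] :
    Integrable (Dd X) ν :=
  (BoundedContinuousFunction.mkOfCompact ⟨Dd X, Dd_continuous hXne⟩).integrable ν

include hXne hXcl in
lemma integral_Dd_zero (ν : Measure Conf) [IsProbabilityMeasure ν] (hνX : ν X = 1) :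
    ∫ y, Dd X y ∂ν = 0 := by
  have hae : (Dd X) =ᵐ[ν] 0 := by
    have hXc : ν Xᶜ = 0 := by
      have := measure_compl hXcl.measurableSet (measure_ne_top ν X)
      rw [hνX, measure_univ] at this
      simpa using this
    apply measure_mono_null _ hXc
    intro y hy
    simp only [Set.mem_compl_iff]
    intro hyX
    exact hy (Dd_eq_zero_of_mem hyX)
  rw [integral_congr_ae hae]
  simp

include hXne hXcl in
lemma Xmass_of_integral_Dd_zero (ν : Measure Conf) [IsProbabilityMeasure ν]
    (hint : ∫ y, Dd X y ∂ν = 0) : ν X = 1 := by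
  have hae : (Dd X) =ᵐ[ν] 0 :=
    (integral_eq_zero_iff_of_nonneg (fun y => Dd_nonneg X y) (Dd_integrable hXne ν)).1 hint
  have hcompl : ν Xᶜ = 0 := by
    apply measure_mono_null _ hae
    intro y hy
    simp only [Set.mem_compl_iff] at hy
    simp only [Set.mem_setOf_eq]
    intro h0
    exact absurd h0 (ne_of_gt (Dd_pos_of_not_mem hXne hXcl hy))
  have h1 : (1:ℝ≥0∞) = ν Set.univ := (measure_univ (μ := ν)).symm
  have : ν Set.univ ≤ ν X + ν Xᶜ := by
    rw [← Set.union_compl_self X] at h1 ⊢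
    exact measure_union_le X Xᶜ
  rw [hcompl, add_zero] at this
  exact le_antisymm (prob_le_one) (h1 ▸ this)

include hXne hXcl in
lemma phiX_integral (ν : Measure Conf) [IsProbabilityMeasure ν] :
    ∫ y, phiX X y ∂ν = -∫ y, Dd X y ∂ν := by
  have : phiX X = fun y => -(Dd X y) := rfl
  rw [this, integral_neg]

include hXne hXcl in
lemma Dd_integral_bound {β : ℝ} (hβ : 0 < β) {μβ μ1 : Measure Conf}
    (heq : IsEquilibriumState (phiX X) β μβ) (hμ1 : IsInvProb μ1) (hμ1X : μ1 X = 1) :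
    ∫ y, Dd X y ∂μβ ≤ 1/β := by
  have hβprob : IsProbabilityMeasure μβ := heq.1.1
  have hμ1prob : IsProbabilityMeasure μ1 := hμ1.1
  have hkey := heq.2 μ1 hμ1
  rw [phiX_integral hXne hXcl μ1, phiX_integral hXne hXcl μβ,
    integral_Dd_zero hXne hXcl μ1 hμ1X] at hkey
  have h1 := entropy_nonneg μ1
  have h2 := entropy_le_one μβ
  have h3 : β * ∫ y, Dd X y ∂μβ ≤ 1 := by linarith
  rw [le_div_iff₀ hβ]
  linarith

end Xfacts
lemma measurable_shiftMap : Measurable shiftMap :=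
  measurable_pi_lambda _ fun n => measurable_pi_apply (n+1)

lemma measurable_flip01 : Measurable flip01 :=
  measurable_pi_lambda _ fun n =>
    (measurable_of_countable (fun b : Bool => !b)).comp (measurable_pi_apply n)

lemma flip01_invol : flip01 ∘ flip01 = id := by
  funext x
  funext n
  simp [flip01]

lemma cylinder_zero (w : Fin 0 → Bool) : _root_.cylinder w = Set.univ := by
  ext x
  simp only [Set.mem_univ, iff_true]
  exact fun i => i.elim0

/-- bitwise negation of a word -/
def negw {n : ℕ} (w : Fin n → Bool) : Fin n → Bool := fun i => !(w i)

lemma flip_preimage_cylinder {n : ℕ} (w : Fin n → Bool) :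
    flip01 ⁻¹' (_root_.cylinder w) = _root_.cylinder (negw w) := by
  ext x
  show (∀ i : Fin n, Bool.not (x i) = w i) ↔ (∀ i : Fin n, x i = Bool.not (w i))
  constructor <;> intro h i <;> have := h i
  · rw [← this, Bool.not_not]
  · rw [this, Bool.not_not]

lemma cylinder_split_snoc {n : ℕ} (w : Fin n → Bool) :
    _root_.cylinder w =
      _root_.cylinder (Fin.snoc w false) ∪ _root_.cylinder (Fin.snoc w true) := by
  ext x
  constructor
  · intro hx
    have hall : ∀ b : Bool, x (Fin.last n : Fin (n+1)) = b →
        x ∈ _root_.cylinder (Fin.snoc w b) := by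
      intro b hb i
      refine Fin.lastCases ?_ ?_ i
      · rw [Fin.snoc_last]
        exact hb
      · intro j
        rw [Fin.snoc_castSucc]
        have : ((Fin.castSucc j : Fin (n+1)) : ℕ) = (j : ℕ) := rfl
        rw [this]
        exact hx j
    rcases hb : x (Fin.last n : Fin (n+1)) with _ | _
    · exact Or.inl (hall false hb)
    · exact Or.inr (hall true hb)
  · intro hx i
    rcases hx with hx | hx
    all_goals {
      have := hx (Fin.castSucc i)
      rw [Fin.snoc_castSucc] at this
      have hco : ((Fin.castSucc i : Fin (n+1)) : ℕ) = (i : ℕ) := rfl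
      rw [hco] at this
      exact this
    }

lemma snoc_ne {n : ℕ} (w : Fin n → Bool) : (Fin.snoc w false : Fin (n+1) → Bool) ≠ Fin.snoc w true := by
  intro h
  have := congrFun h (Fin.last n)
  rw [Fin.snoc_last, Fin.snoc_last] at this
  exact Bool.false_ne_true this

lemma cons_ne {n : ℕ} (w : Fin n → Bool) :
    (Fin.cons false w : Fin (n+1) → Bool) ≠ Fin.cons true w := by
  intro h
  have := congrFun h 0
  rw [Fin.cons_zero, Fin.cons_zero] at this
  exact Bool.false_ne_true this

lemma shift_preimage_cylinder {n : ℕ} (w : Fin n → Bool) :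
    shiftMap ⁻¹' (_root_.cylinder w) =
      _root_.cylinder (Fin.cons false w) ∪ _root_.cylinder (Fin.cons true w) := by
  ext x
  have hmem : x ∈ shiftMap ⁻¹' (_root_.cylinder w) ↔ ∀ i : Fin n, x ((i : ℕ)+1) = w i := Iff.rfl
  rw [hmem]
  constructor
  · intro hx
    have hall : ∀ b : Bool, x 0 = b → x ∈ _root_.cylinder (Fin.cons b w) := by
      intro b hb i
      refine Fin.cases ?_ ?_ i
      · rw [Fin.cons_zero]
        exact hb
      · intro j
        rw [Fin.cons_succ]
        have : ((Fin.succ j : Fin (n+1)) : ℕ) = (j : ℕ) + 1 := rfl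
        rw [this]
        exact hx j
    rcases hb : x 0 with _ | _
    · exact Or.inl (hall false hb)
    · exact Or.inr (hall true hb)
  · intro hx i
    rcases hx with hx | hx
    all_goals {
      have := hx (Fin.succ i)
      rw [Fin.cons_succ] at this
      exact this
    }

lemma measure_cyl_snoc (ν : Measure Conf) {n : ℕ} (w : Fin n → Bool) :
    ν (_root_.cylinder w) =
      ν (_root_.cylinder (Fin.snoc w false)) + ν (_root_.cylinder (Fin.snoc w true)) := by
  rw [cylinder_split_snoc w,
    measure_union (cylinder_disjoint (snoc_ne w)) (measurableSet_cylinder _)]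

lemma map_shift_cyl (ν : Measure Conf) {n : ℕ} (w : Fin n → Bool) :
    (ν.map shiftMap) (_root_.cylinder w) =
      ν (_root_.cylinder (Fin.cons false w)) + ν (_root_.cylinder (Fin.cons true w)) := by
  rw [Measure.map_apply measurable_shiftMap (measurableSet_cylinder w),
    shift_preimage_cylinder w,
    measure_union (cylinder_disjoint (cons_ne w)) (measurableSet_cylinder _)]

lemma map_flip_cyl (ν : Measure Conf) {n : ℕ} (w : Fin n → Bool) :
    (ν.map flip01) (_root_.cylinder w) = ν (_root_.cylinder (negw w)) := by
  rw [Measure.map_apply measurable_flip01 (measurableSet_cylinder w), flip_preimage_cylinder w]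

/-! ### the coordinate space -/

abbrev WIdx := Σ n : ℕ, (Fin n → Bool)
abbrev Esp := WIdx → ℝ

/-- cylinder coordinates of a measure -/
def Ψm (ν : Measure Conf) : Esp := fun i => (ν (_root_.cylinder i.2)).toReal

lemma Ψm_mem_Icc (ν : Measure Conf) [IsProbabilityMeasure ν] (i : WIdx) :
    Ψm ν i ∈ Set.Icc (0:ℝ) 1 :=
  ⟨ENNReal.toReal_nonneg, le_trans (ENNReal.toReal_mono ENNReal.one_ne_top prob_le_one) (by norm_num)⟩

/-- The core limit lemma. -/
lemma limit_package {X : Set Conf} (hXne : X.Nonempty) (hXcl : IsClosed X)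
    (ν : ℕ → Measure Conf) (hinv : ∀ k, IsInvProb (ν k))
    (δ : ℕ → ℝ) (hδ : ∀ k, ∫ y, Dd X y ∂(ν k) ≤ δ k) (hδ0 : Tendsto δ atTop (𝓝 0))
    (L : Esp) (hconv : ∀ i : WIdx, Tendsto (fun k => Ψm (ν k) i) atTop (𝓝 (L i))) :
    ∃ νl : Measure Conf, IsInvProb νl ∧ νl X = 1 ∧ Ψm νl = L ∧
      (∀ (n : ℕ) (w : Fin n → Bool), νl (_root_.cylinder w) = ENNReal.ofReal (L ⟨n, w⟩)) ∧
      (∀ g : C(Conf, ℝ), Tendsto (fun k => ∫ x, g x ∂(ν k)) atTop (𝓝 (∫ x, g x ∂νl))) := by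
  haveI hpm : ∀ k, IsProbabilityMeasure (ν k) := fun k => (hinv k).1
  have hp0 : ∀ i : WIdx, 0 ≤ L i := fun i =>
    ge_of_tendsto' (hconv i) (fun k => ENNReal.toReal_nonneg)
  have hp1 : ∀ w : Fin 0 → Bool, L ⟨0, w⟩ = 1 := by
    intro w
    apply tendsto_nhds_unique (hconv ⟨0, w⟩)
    have : ∀ k, Ψm (ν k) ⟨0, w⟩ = 1 := by
      intro k
      rw [Ψm]
      show ((ν k) (_root_.cylinder w)).toReal = 1
      rw [cylinder_zero w, measure_univ, ENNReal.toReal_one]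
    simp only [this]
    exact tendsto_const_nhds
  have hpc : ∀ (n : ℕ) (w : Fin n → Bool),
      L ⟨n, w⟩ = L ⟨n+1, Fin.snoc w false⟩ + L ⟨n+1, Fin.snoc w true⟩ := by
    intro n w
    apply tendsto_nhds_unique (hconv ⟨n, w⟩)
    have heq : ∀ k, Ψm (ν k) ⟨n, w⟩ =
        Ψm (ν k) ⟨n+1, Fin.snoc w false⟩ + Ψm (ν k) ⟨n+1, Fin.snoc w true⟩ := by
      intro k
      show ((ν k) (_root_.cylinder w)).toReal = _
      rw [measure_cyl_snoc (ν k) w, ENNReal.toReal_add (measure_ne_top _ _) (measure_ne_top _ _)]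
      rfl
    simp only [heq]
    exact ((hconv ⟨n+1, Fin.snoc w false⟩).add (hconv ⟨n+1, Fin.snoc w true⟩))
  obtain ⟨νl, hνlprob, hνlcyl⟩ := exists_measure_of_cylinderData (fun n w => L ⟨n, w⟩)
    (fun n w => hp0 ⟨n, w⟩) hp1 hpc
  haveI := hνlprob
  have hΨ : Ψm νl = L := by
    funext i
    obtain ⟨n, w⟩ := i
    rw [Ψm]
    show (νl (_root_.cylinder w)).toReal = _
    rw [hνlcyl n w, ENNReal.toReal_ofReal (hp0 ⟨n, w⟩)]
  have hcylconv : ∀ (n : ℕ) (w : Fin n → Bool),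
      Tendsto (fun k => ((ν k) (_root_.cylinder w)).toReal) atTop
        (𝓝 ((νl (_root_.cylinder w)).toReal)) := by
    intro n w
    have : (νl (_root_.cylinder w)).toReal = L ⟨n, w⟩ := by
      rw [hνlcyl n w, ENNReal.toReal_ofReal (hp0 ⟨n, w⟩)]
    rw [this]
    exact hconv ⟨n, w⟩
  have hintconv : ∀ g : C(Conf, ℝ),
      Tendsto (fun k => ∫ x, g x ∂(ν k)) atTop (𝓝 (∫ x, g x ∂νl)) :=
    fun g => tendsto_integral_of_cylinder ν νl hcylconv g
  have hshift : νl.map shiftMap = νl := by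
    haveI : IsProbabilityMeasure (νl.map shiftMap) :=
      Measure.isProbabilityMeasure_map measurable_shiftMap.aemeasurable
    apply measure_eq_of_cylinder
    intro n w
    rw [map_shift_cyl νl w, hνlcyl n w, hνlcyl (n+1) (Fin.cons false w),
      hνlcyl (n+1) (Fin.cons true w),
      ← ENNReal.ofReal_add (hp0 ⟨n+1, Fin.cons false w⟩) (hp0 ⟨n+1, Fin.cons true w⟩)]
    congr 1
    apply tendsto_nhds_unique
      ((hconv ⟨n+1, Fin.cons false w⟩).add (hconv ⟨n+1, Fin.cons true w⟩))
    have heq : ∀ k, Ψm (ν k) ⟨n+1, Fin.cons false w⟩ + Ψm (ν k) ⟨n+1, Fin.cons true w⟩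
        = Ψm (ν k) ⟨n, w⟩ := by
      intro k
      show ((ν k) (_root_.cylinder (Fin.cons false w))).toReal
          + ((ν k) (_root_.cylinder (Fin.cons true w))).toReal
          = ((ν k) (_root_.cylinder w)).toReal
      rw [← ENNReal.toReal_add (measure_ne_top _ _) (measure_ne_top _ _), ← map_shift_cyl,
        (hinv k).2]
    simp only [heq]
    exact hconv ⟨n, w⟩
  have hX1 : νl X = 1 := by
    apply Xmass_of_integral_Dd_zero hXne hXcl νl
    have ha := hintconv ⟨Dd X, Dd_continuous hXne⟩
    have ha' : Tendsto (fun k => ∫ y, Dd X y ∂(ν k)) atTop (𝓝 (∫ y, Dd X y ∂νl)) := ha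
    have h0 : Tendsto (fun k => ∫ y, Dd X y ∂(ν k)) atTop (𝓝 0) := by
      apply tendsto_of_tendsto_of_tendsto_of_le_of_le tendsto_const_nhds hδ0
      · intro k
        exact integral_nonneg (fun y => Dd_nonneg X y)
      · exact hδ
    exact tendsto_nhds_unique ha' h0
  exact ⟨νl, ⟨hνlprob, hshift⟩, hX1, hΨ, hνlcyl, hintconv⟩

/-! ### the simplex of invariant measures on X -/

def SetS (X : Set Conf) : Set (Measure Conf) := {ν | IsInvProb ν ∧ ν X = 1}

def S' (X : Set Conf) : Set Esp := Ψm '' SetS X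

lemma S'_isCompact {X : Set Conf} (hXne : X.Nonempty) (hXcl : IsClosed X) :
    IsCompact (S' X) := by
  have hbox : IsCompact (Set.univ.pi (fun _ : WIdx => Set.Icc (0:ℝ) 1)) :=
    isCompact_univ_pi fun _ => isCompact_Icc
  apply IsCompact.of_isClosed_subset hbox
  · apply IsSeqClosed.isClosed
    intro q L hq hqL
    choose νf hνf hΨνf using hq
    haveI : ∀ k, IsProbabilityMeasure (νf k) := fun k => (hνf k).1.1
    have hconv : ∀ i : WIdx, Tendsto (fun k => Ψm (νf k) i) atTop (𝓝 (L i)) := by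
      intro i
      have h := (tendsto_pi_nhds.1 hqL) i
      have he : (fun k => Ψm (νf k) i) = fun k => q k i := by
        funext k
        rw [hΨνf k]
      rw [he]
      exact h
    obtain ⟨νl, hνlinv, hνlX, hΨl, -, -⟩ := limit_package hXne hXcl νf (fun k => (hνf k).1)
      (fun _ => 0) (fun k => le_of_eq (integral_Dd_zero hXne hXcl (νf k) (hνf k).2))
      tendsto_const_nhds L hconv
    exact ⟨νl, ⟨hνlinv, hνlX⟩, hΨl⟩
  · rintro q ⟨ν, hν, rfl⟩
    haveI := hν.1.1
    intro i _
    exact Ψm_mem_Icc ν i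

lemma SetS_combo {X : Set Conf} {ν1 ν2 : Measure Conf} (h1 : ν1 ∈ SetS X) (h2 : ν2 ∈ SetS X)
    {a b : ℝ} (ha : 0 ≤ a) (hb : 0 ≤ b) (hab : a + b = 1) :
    (ENNReal.ofReal a • ν1 + ENNReal.ofReal b • ν2) ∈ SetS X ∧
      Ψm (ENNReal.ofReal a • ν1 + ENNReal.ofReal b • ν2) = a • Ψm ν1 + b • Ψm ν2 := by
  haveI := h1.1.1
  haveI := h2.1.1
  have happly : ∀ A : Set Conf,
      (ENNReal.ofReal a • ν1 + ENNReal.ofReal b • ν2) A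
        = ENNReal.ofReal a * ν1 A + ENNReal.ofReal b * ν2 A := by
    intro A
    rw [Measure.add_apply, Measure.smul_apply, Measure.smul_apply, smul_eq_mul, smul_eq_mul]
  have hone : ∀ {c d : ℝ≥0∞}, c = 1 → d = 1 →
      ENNReal.ofReal a * c + ENNReal.ofReal b * d = 1 := by
    intro c d hc hd
    rw [hc, hd, mul_one, mul_one, ← ENNReal.ofReal_add ha hb, hab, ENNReal.ofReal_one]
  refine ⟨⟨⟨⟨?_⟩, ?_⟩, ?_⟩, ?_⟩
  · rw [happly]
    exact hone measure_univ measure_univ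
  · rw [Measure.map_add _ _ measurable_shiftMap, Measure.map_smul, Measure.map_smul,
      h1.1.2, h2.1.2]
  · rw [happly]
    exact hone h1.2 h2.2
  · funext i
    rw [Ψm, happly]
    rw [ENNReal.toReal_add (ENNReal.mul_ne_top ENNReal.ofReal_ne_top (measure_ne_top _ _))
      (ENNReal.mul_ne_top ENNReal.ofReal_ne_top (measure_ne_top _ _)),
      ENNReal.toReal_mul, ENNReal.toReal_mul, ENNReal.toReal_ofReal ha,
      ENNReal.toReal_ofReal hb]
    rfl

lemma S'_convex (X : Set Conf) : Convex ℝ (S' X) := by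
  rintro q1 ⟨ν1, h1, rfl⟩ q2 ⟨ν2, h2, rfl⟩ a b ha hb hab
  obtain ⟨hmem, heq⟩ := SetS_combo h1 h2 ha hb hab
  exact ⟨_, hmem, heq⟩

lemma restrict_mem_SetS {X : Set Conf} (hXcl : IsClosed X) {ν : Measure Conf}
    (hν : ν ∈ SetS X) {s : Set Conf} (hs : MeasurableSet s) (hsinv : shiftMap ⁻¹' s = s)
    (hs0 : ν s ≠ 0) :
    ((ν s)⁻¹ • ν.restrict s) ∈ SetS X := by
  haveI := hν.1.1
  have hsne : ν s ≠ ∞ := measure_ne_top ν s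
  have hres_inv : (ν.restrict s).map shiftMap = ν.restrict s := by
    ext A hA
    rw [Measure.map_apply measurable_shiftMap hA, Measure.restrict_apply hA,
      Measure.restrict_apply (measurable_shiftMap hA)]
    have : shiftMap ⁻¹' A ∩ s = shiftMap ⁻¹' (A ∩ s) := by
      rw [Set.preimage_inter, hsinv]
    rw [this, ← Measure.map_apply measurable_shiftMap (hA.inter hs), hν.1.2]
  have hXs : ν (X ∩ s) = ν s := by
    have hsplit : ν (s ∩ X) + ν (s \ X) = ν s := measure_inter_add_diff s hXcl.measurableSet
    have hcompl : ν Xᶜ = 0 := by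
      have := measure_compl hXcl.measurableSet (measure_ne_top ν X)
      rw [hν.2, measure_univ] at this
      simpa using this
    have hz : ν (s \ X) = 0 := measure_mono_null (Set.diff_subset_compl s X) hcompl
    rw [hz, add_zero] at hsplit
    rw [Set.inter_comm]
    exact hsplit
  refine ⟨⟨⟨?_⟩, ?_⟩, ?_⟩
  · rw [Measure.smul_apply, Measure.restrict_apply_univ, smul_eq_mul]
    exact ENNReal.inv_mul_cancel hs0 hsne
  · rw [Measure.map_smul, hres_inv]
  · rw [Measure.smul_apply, Measure.restrict_apply hXcl.measurableSet, smul_eq_mul, hXs]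
    exact ENNReal.inv_mul_cancel hs0 hsne

section Identify

variable {X : Set Conf} (hXne : X.Nonempty) (hXcl : IsClosed X)
  {μ' μ'' : Measure Conf}
  (h1 : IsInvProb μ' ∧ IsErgodicMeasure μ' ∧ μ' X = 1)
  (h2 : IsInvProb μ'' ∧ IsErgodicMeasure μ'' ∧ μ'' X = 1)
  (hflip : μ'' = μ'.map flip01) (hne : μ' ≠ μ'')
  (honly : ∀ ν : Measure Conf, IsInvProb ν → IsErgodicMeasure ν → ν X = 1 →
      ν = μ' ∨ ν = μ'')

include hXne hXcl honly h1 h2 in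
lemma extremePoints_sub : (S' X).extremePoints ℝ ⊆ {Ψm μ', Ψm μ''} := by
  intro q hq
  obtain ⟨hqS, hext⟩ := mem_extremePoints.1 hq
  obtain ⟨ν, hνS, rfl⟩ := hqS
  haveI := hνS.1.1
  have herg : IsErgodicMeasure ν := by
    intro s hs hsinv
    by_contra hc
    push_neg at hc
    obtain ⟨hs0, hs1⟩ := hc
    have hsne : ν s ≠ ∞ := measure_ne_top ν s
    have hcompl_inv : shiftMap ⁻¹' sᶜ = sᶜ := by rw [Set.preimage_compl, hsinv]
    have hscompl0 : ν sᶜ ≠ 0 := by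
      intro hzero
      apply hs1
      have h1' : ν s + ν sᶜ = 1 := by
        rw [measure_add_measure_compl hs, measure_univ]
      rw [hzero, add_zero] at h1'
      exact h1'
    set ν1 := (ν s)⁻¹ • ν.restrict s with hν1
    set ν2 := (ν sᶜ)⁻¹ • ν.restrict sᶜ with hν2
    have hm1 : ν1 ∈ SetS X := restrict_mem_SetS hXcl hνS hs hsinv hs0
    have hm2 : ν2 ∈ SetS X := restrict_mem_SetS hXcl hνS hs.compl hcompl_inv hscompl0
    haveI hp1 : IsProbabilityMeasure ν1 := hm1.1.1
    haveI hp2 : IsProbabilityMeasure ν2 := hm2.1.1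
    have htr0 : (ν s).toReal ≠ 0 := ENNReal.toReal_ne_zero.2 ⟨hs0, hsne⟩
    have htrc0 : (ν sᶜ).toReal ≠ 0 := ENNReal.toReal_ne_zero.2 ⟨hscompl0, measure_ne_top ν sᶜ⟩
    have hΨν1 : ∀ i : WIdx, Ψm ν1 i = (ν s).toReal⁻¹ * (ν (_root_.cylinder i.2 ∩ s)).toReal := by
      intro i
      rw [Ψm, hν1, Measure.smul_apply, smul_eq_mul, ENNReal.toReal_mul, ENNReal.toReal_inv,
        Measure.restrict_apply (measurableSet_cylinder i.2)]
    have hΨν2 : ∀ i : WIdx, Ψm ν2 i = (ν sᶜ).toReal⁻¹ * (ν (_root_.cylinder i.2 ∩ sᶜ)).toReal := by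
      intro i
      rw [Ψm, hν2, Measure.smul_apply, smul_eq_mul, ENNReal.toReal_mul, ENNReal.toReal_inv,
        Measure.restrict_apply (measurableSet_cylinder i.2)]
    have hcomb : (ν s).toReal • Ψm ν1 + (ν sᶜ).toReal • Ψm ν2 = Ψm ν := by
      funext i
      show (ν s).toReal * Ψm ν1 i + (ν sᶜ).toReal * Ψm ν2 i = (ν (_root_.cylinder i.2)).toReal
      rw [hΨν1 i, hΨν2 i, ← mul_assoc, ← mul_assoc, mul_inv_cancel₀ htr0,
        mul_inv_cancel₀ htrc0, one_mul, one_mul,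
        ← ENNReal.toReal_add (measure_ne_top _ _) (measure_ne_top _ _)]
      congr 1
      have := measure_inter_add_diff (_root_.cylinder i.2) hs (μ := ν)
      rw [Set.diff_eq] at this
      exact this
    have hsum : (ν s).toReal + (ν sᶜ).toReal = 1 := by
      rw [← ENNReal.toReal_add hsne (measure_ne_top ν sᶜ), measure_add_measure_compl hs,
        measure_univ, ENNReal.toReal_one]
    have hopen : Ψm ν ∈ openSegment ℝ (Ψm ν1) (Ψm ν2) :=
      ⟨(ν s).toReal, (ν sᶜ).toReal,
        ENNReal.toReal_pos hs0 hsne, ENNReal.toReal_pos hscompl0 (measure_ne_top ν sᶜ),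
        hsum, hcomb⟩
    obtain ⟨he1, he2⟩ := hext (Ψm ν1) ⟨ν1, hm1, rfl⟩ (Ψm ν2) ⟨ν2, hm2, rfl⟩ hopen
    have hΨeq : Ψm ν1 = Ψm ν2 := he1.trans he2.symm
    have hν12 : ν1 = ν2 := by
      apply measure_eq_of_cylinder
      intro n w
      have := congrFun hΨeq ⟨n, w⟩
      rw [Ψm, Ψm] at this
      exact (ENNReal.toReal_eq_toReal_iff' (measure_ne_top _ _) (measure_ne_top _ _)).1 this
    have hν1s : ν1 s = 1 := by
      rw [hν1, Measure.smul_apply, Measure.restrict_apply hs, Set.inter_self, smul_eq_mul]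
      exact ENNReal.inv_mul_cancel hs0 hsne
    have hν2s : ν2 s = 0 := by
      rw [hν2, Measure.smul_apply, Measure.restrict_apply hs, Set.inter_compl_self,
        measure_empty, smul_eq_mul, mul_zero]
    rw [hν12, hν2s] at hν1s
    exact zero_ne_one hν1s
  rcases honly ν hνS.1 herg hνS.2 with rfl | rfl
  · exact Set.mem_insert _ _
  · exact Set.mem_insert_of_mem _ rfl

include hXne hXcl honly h1 h2 hflip hne in
lemma identify (ν : Measure Conf) (hν : IsInvProb ν) (hνX : ν X = 1)
    (hflipν : ν.map flip01 = ν) :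
    ν = ((1:ℝ≥0∞)/2) • μ' + ((1:ℝ≥0∞)/2) • μ'' := by
  haveI := hν.1
  haveI := h1.1.1
  haveI := h2.1.1
  have hKM := closure_convexHull_extremePoints (S'_isCompact hXne hXcl) (S'_convex X)
  have hseg : S' X ⊆ segment ℝ (Ψm μ') (Ψm μ'') := by
    rw [← hKM]
    have hch : convexHull ℝ ((S' X).extremePoints ℝ) ⊆ convexHull ℝ {Ψm μ', Ψm μ''} :=
      convexHull_mono (extremePoints_sub hXne hXcl h1 h2 honly)
    rw [convexHull_pair] at hch
    have hclosed : IsClosed (segment ℝ (Ψm μ') (Ψm μ'')) := by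
      rw [segment_eq_image]
      apply IsCompact.isClosed
      apply isCompact_Icc.image
      continuity
    intro q hqc
    exact hclosed.closure_subset_iff.2 hch (closure_mono (by exact fun t ht => ht) hqc)
  have hmem : Ψm ν ∈ segment ℝ (Ψm μ') (Ψm μ'') := hseg ⟨ν, ⟨hν, hνX⟩, rfl⟩
  obtain ⟨a, b, ha, hb, hab, habeq⟩ := hmem
  -- coordinate equations
  have hEq : ∀ (n : ℕ) (w : Fin n → Bool),
      a * (μ' (_root_.cylinder w)).toReal + b * (μ'' (_root_.cylinder w)).toReal
        = (ν (_root_.cylinder w)).toReal := by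
    intro n w
    exact congrFun habeq ⟨n, w⟩
  -- flip relations
  have hflip2 : μ''.map flip01 = μ' := by
    rw [hflip, Measure.map_map measurable_flip01 measurable_flip01, flip01_invol,
      Measure.map_id]
  have hμ''cyl : ∀ (n : ℕ) (w : Fin n → Bool),
      μ'' (_root_.cylinder (negw w)) = μ' (_root_.cylinder w) := by
    intro n w
    have := map_flip_cyl μ'' w
    rw [hflip2] at this
    exact this.symm
  have hμ'cyl : ∀ (n : ℕ) (w : Fin n → Bool),
      μ' (_root_.cylinder (negw w)) = μ'' (_root_.cylinder w) := by
    intro n w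
    have := map_flip_cyl μ' w
    rw [← hflip] at this
    exact this.symm
  have hνcyl : ∀ (n : ℕ) (w : Fin n → Bool),
      ν (_root_.cylinder (negw w)) = ν (_root_.cylinder w) := by
    intro n w
    have := map_flip_cyl ν w
    rw [hflipν] at this
    exact this.symm
  -- a = b
  have hab2 : ∀ (n : ℕ) (w : Fin n → Bool),
      (a - b) * ((μ' (_root_.cylinder w)).toReal - (μ'' (_root_.cylinder w)).toReal) = 0 := by
    intro n w
    have e1 := hEq n w
    have e2 := hEq (n) (negw w)
    rw [hμ'cyl n w, hμ''cyl n w, hνcyl n w] at e2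
    nlinarith [e1, e2]
  have hwne : ∃ (n : ℕ) (w : Fin n → Bool),
      μ' (_root_.cylinder w) ≠ μ'' (_root_.cylinder w) := by
    by_contra hcon
    push_neg at hcon
    exact hne (measure_eq_of_cylinder μ' μ'' hcon)
  obtain ⟨n0, w0, hw0⟩ := hwne
  have hαπ : a = b := by
    have h := hab2 n0 w0
    rcases mul_eq_zero.1 h with h' | h'
    · linarith [sub_eq_zero.1 h']
    · exfalso
      apply hw0
      have := sub_eq_zero.1 h'
      exact (ENNReal.toReal_eq_toReal_iff' (measure_ne_top _ _) (measure_ne_top _ _)).1 this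
  have ha2 : a = 1/2 := by linarith
  have hb2 : b = 1/2 := by linarith
  -- conclude
  haveI : IsProbabilityMeasure (((1:ℝ≥0∞)/2) • μ' + ((1:ℝ≥0∞)/2) • μ'') := by
    constructor
    simp only [Measure.coe_add, Pi.add_apply, Measure.smul_apply, smul_eq_mul, measure_univ,
      mul_one]
    rw [ENNReal.div_add_div_same, one_add_one_eq_two, ENNReal.div_self (by norm_num) (by norm_num)]
  apply measure_eq_of_cylinder
  intro n w
  have hrhs : (((1:ℝ≥0∞)/2) • μ' + ((1:ℝ≥0∞)/2) • μ'') (_root_.cylinder w)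
      = (1/2 : ℝ≥0∞) * μ' (_root_.cylinder w) + (1/2 : ℝ≥0∞) * μ'' (_root_.cylinder w) := by
    simp only [Measure.coe_add, Pi.add_apply, Measure.smul_apply, smul_eq_mul]
  rw [hrhs]
  apply (ENNReal.toReal_eq_toReal_iff' (measure_ne_top _ _) ?_).1
  · rw [ENNReal.toReal_add (ENNReal.mul_ne_top (by norm_num) (measure_ne_top _ _))
      (ENNReal.mul_ne_top (by norm_num) (measure_ne_top _ _)),
      ENNReal.toReal_mul, ENNReal.toReal_mul]
    have h12 : ((1:ℝ≥0∞)/2).toReal = (1/2 : ℝ) := by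
      rw [ENNReal.toReal_div, ENNReal.toReal_one, ENNReal.toReal_ofNat]
    rw [h12]
    rw [← hEq n w, ha2, hb2]
  · exact ENNReal.add_ne_top.2 ⟨ENNReal.mul_ne_top (by norm_num) (measure_ne_top _ _),
      ENNReal.mul_ne_top (by norm_num) (measure_ne_top _ _)⟩

end Identify


end Aux

/-- If `X` is a subshift invariant under the flip involution `σ`, whose
ergodic shift-invariant measures supported on `X` are exactly two measures `μ'` and
`μ'' = σ_* μ'` with `μ' ≠ μ''`, then every choice of `σ`-symmetric equilibrium states
`μ β` for `β φ_X` converges weak-* to `½μ' + ½μ''` as `β → +∞`. -/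
theorem stmt14 (X : Set Conf) (hX : IsSubshift X) (hsym : flip01 '' X = X)
    (μ' μ'' : Measure Conf)
    (h1 : IsInvProb μ' ∧ IsErgodicMeasure μ' ∧ μ' X = 1)
    (h2 : IsInvProb μ'' ∧ IsErgodicMeasure μ'' ∧ μ'' X = 1)
    (hflip : μ'' = μ'.map flip01) (hne : μ' ≠ μ'')
    (honly : ∀ ν : Measure Conf, IsInvProb ν → IsErgodicMeasure ν → ν X = 1 →
      ν = μ' ∨ ν = μ'')
    (μ : ℝ → Measure Conf)
    (hμ : ∀ β : ℝ, 0 < β →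
      IsEquilibriumState (phiX X) β (μ β) ∧ (μ β).map flip01 = μ β) :
    ∀ f : C(Conf, ℝ),
      Tendsto (fun β : ℝ => ∫ x, f x ∂(μ β)) atTop
        (𝓝 (∫ x, f x ∂(((1 : ℝ≥0∞) / 2) • μ' + ((1 : ℝ≥0∞) / 2) • μ''))) := by
  intro f
  obtain ⟨hXne, hXcl, -⟩ := hX
  haveI hp' : IsProbabilityMeasure μ' := h1.1.1
  haveI hp'' : IsProbabilityMeasure μ'' := h2.1.1
  apply Filter.tendsto_of_subseq_tendsto
  intro ns hns
  obtain ⟨K, hK⟩ := Filter.eventually_atTop.1 (hns.eventually_ge_atTop 1)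
  have hσ1 : ∀ k : ℕ, 1 ≤ ns (k + K) := fun k => hK _ (Nat.le_add_left K k)
  have hσpos : ∀ k : ℕ, 0 < ns (k + K) := fun k => lt_of_lt_of_le one_pos (hσ1 k)
  have hσtop : Tendsto (fun k : ℕ => ns (k + K)) atTop atTop :=
    hns.comp (tendsto_add_atTop_nat K)
  have hfacts : ∀ k : ℕ, IsEquilibriumState (phiX X) (ns (k + K)) (μ (ns (k + K)))
      ∧ (μ (ns (k + K))).map flip01 = μ (ns (k + K)) := fun k => hμ _ (hσpos k)
  haveI hpk : ∀ k : ℕ, IsProbabilityMeasure (μ (ns (k + K))) := fun k => (hfacts k).1.1.1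
  have hδ : ∀ k : ℕ, ∫ y, Aux.Dd X y ∂(μ (ns (k + K))) ≤ 1 / ns (k + K) := fun k =>
    Aux.Dd_integral_bound hXne hXcl (hσpos k) (hfacts k).1 h1.1 h1.2.2
  have hδ0 : Tendsto (fun k : ℕ => 1 / ns (k + K)) atTop (𝓝 0) :=
    tendsto_const_nhds.div_atTop hσtop
  have hbox : IsCompact (Set.univ.pi fun _ : Aux.WIdx => Set.Icc (0:ℝ) 1) :=
    isCompact_univ_pi fun _ => isCompact_Icc
  have hqmem : ∀ k : ℕ, Aux.Ψm (μ (ns (k + K))) ∈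
      (Set.univ.pi fun _ : Aux.WIdx => Set.Icc (0:ℝ) 1) := by
    intro k
    intro i _
    exact Aux.Ψm_mem_Icc (μ (ns (k + K))) i
  obtain ⟨L, hLmem, φ, hφ, hφtend⟩ := hbox.tendsto_subseq hqmem
  have hconv : ∀ i : Aux.WIdx,
      Tendsto (fun k => Aux.Ψm (μ (ns (φ k + K))) i) atTop (𝓝 (L i)) := by
    intro i
    exact (tendsto_pi_nhds.1 hφtend) i
  obtain ⟨νl, hνlinv, hνlX, hΨl, hνlcyl, hint⟩ := Aux.limit_package hXne hXcl
    (fun k => μ (ns (φ k + K))) (fun k => (hfacts (φ k)).1.1)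
    (fun k => 1 / ns (φ k + K)) (fun k => hδ (φ k))
    (hδ0.comp hφ.tendsto_atTop) L hconv
  haveI : IsProbabilityMeasure νl := hνlinv.1
  have hflipl : νl.map flip01 = νl := by
    haveI : IsProbabilityMeasure (νl.map flip01) :=
      Measure.isProbabilityMeasure_map Aux.measurable_flip01.aemeasurable
    apply Aux.measure_eq_of_cylinder
    intro n w
    rw [Aux.map_flip_cyl νl w]
    apply (ENNReal.toReal_eq_toReal_iff' (measure_ne_top _ _) (measure_ne_top _ _)).1
    have hLnw : (νl (cylinder (Aux.negw w))).toReal = L ⟨n, Aux.negw w⟩ := by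
      rw [← hΨl]; rfl
    have hLw : (νl (cylinder w)).toReal = L ⟨n, w⟩ := by
      rw [← hΨl]; rfl
    rw [hLnw, hLw]
    apply tendsto_nhds_unique (hconv ⟨n, Aux.negw w⟩)
    have heq : ∀ k, Aux.Ψm (μ (ns (φ k + K))) ⟨n, Aux.negw w⟩
        = Aux.Ψm (μ (ns (φ k + K))) ⟨n, w⟩ := by
      intro k
      show ((μ (ns (φ k + K))) (cylinder (Aux.negw w))).toReal = _
      have := Aux.map_flip_cyl (μ (ns (φ k + K))) w
      rw [(hfacts (φ k)).2] at this
      rw [← this]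
      rfl
    simp only [heq]
    exact hconv ⟨n, w⟩
  have hid := Aux.identify hXne hXcl h1 h2 hflip hne honly νl hνlinv hνlX hflipl
  refine ⟨fun n => φ n + K, ?_⟩
  have hgoal := hint f
  rw [hid] at hgoal
  exact hgoal

end
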